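/- Let m > 0, ε > 0 and δ > 0. Then there exists K > 0 such that for every wavenumber k with |k| > K, every eigenvalue σ ∈ ℂ of the linear-stability matrix A_δ(k) satisfies Re σ < 0. Hence in the nonlocal model the range of unstable wavenumbers is bounded: patterns can form only for a finite range of wavelengths. -/

import Mathlib

/-- The nonlocal linear-stability matrix `A_δ(k)` for parameters `m, ε, δ` and
wavenumber `k`: `A_δ(k) = [[a,0,0,c],[0,a,c,0],[d,0,−b,0],[0,d,0,−b]]` with
`a = (1/(1+m)² − 1)k²`, `b = (1+m)/ε`, `c = −2(2 − 1/(1+m))·(k/δ)·sin(δk)`,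
`d = m/(ε(1+m))`. -/
noncomputable def Adelta (m ε δ k : ℝ) : Matrix (Fin 4) (Fin 4) ℝ :=
  !![(1 / (1 + m) ^ 2 - 1) * k ^ 2, 0, 0,
       -2 * (2 - 1 / (1 + m)) * (k / δ) * Real.sin (δ * k);
     0, (1 / (1 + m) ^ 2 - 1) * k ^ 2,
       -2 * (2 - 1 / (1 + m)) * (k / δ) * Real.sin (δ * k), 0;
     m / (ε * (1 + m)), 0, -((1 + m) / ε), 0;
     0, m / (ε * (1 + m)), 0, -((1 + m) / ε)]

/-- `σ ∈ ℂ` is an eigenvalue of the real matrix `M`. -/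
def IsEigC (M : Matrix (Fin 4) (Fin 4) ℝ) (σ : ℂ) : Prop :=
  (M.map (fun x : ℝ => (x : ℂ)) - σ • 1).det = 0

/-- Determinant of the shifted block matrix factors into two quadratics. -/
lemma Adelta_det_factor (a b c d : ℂ) (σ : ℂ) :
    (!![a, 0, 0, c; 0, a, c, 0; d, 0, -b, 0; 0, d, 0, -b] - σ • 1).det =
    ((a - σ) * (b + σ) - c * d) * ((a - σ) * (b + σ) + c * d) := by
  have hM : (!![a, 0, 0, c; 0, a, c, 0; d, 0, -b, 0; 0, d, 0, -b]
        - σ • (1 : Matrix (Fin 4) (Fin 4) ℂ)) =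
      !![a - σ, 0, 0, c; 0, a - σ, c, 0; d, 0, -b - σ, 0; 0, d, 0, -b - σ] := by
    ext i j
    fin_cases i <;> fin_cases j <;>
      simp [Matrix.one_apply, Matrix.smul_apply]
  rw [hM]
  simp [Matrix.det_succ_row_zero, Fin.sum_univ_succ, Fin.castSucc, Fin.castAdd, Fin.castLE, Fin.succAbove]
  ring

/-- Routh–Hurwitz for real quadratics: if `p, q > 0`, every complex root of
`σ² + pσ + q` has negative real part. -/
lemma quad_re_neg (p q : ℝ) (hp : 0 < p) (hq : 0 < q) (σ : ℂ)
    (h : σ ^ 2 + (p : ℂ) * σ + (q : ℂ) = 0) : σ.re < 0 := by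
  by_contra hx
  push_neg at hx
  set x := σ.re with hxdef
  set y := σ.im with hydef
  have hre : x * x - y * y + p * x + q = 0 := by
    have := congrArg Complex.re h
    simpa [pow_two, Complex.add_re, Complex.mul_re, Complex.ofReal_re,
      Complex.ofReal_im] using this
  have him : y * (2 * x + p) = 0 := by
    have := congrArg Complex.im h
    simp [pow_two, Complex.add_im, Complex.mul_im, Complex.ofReal_re,
      Complex.ofReal_im] at this
    linarith [this]
  have hy : y = 0 := by
    rcases mul_eq_zero.mp him with h' | h'
    · exact h'
    · nlinarith
  rw [hy] at hre
  nlinarith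

set_option maxHeartbeats 1000000 in
/-- For `m > 0`, `ε > 0`, `δ > 0`, there exists `K > 0` such that
for every wavenumber `k` with `|k| > K`, every eigenvalue `σ ∈ ℂ` of `A_δ(k)`
satisfies `Re σ < 0`: the range of unstable wavenumbers is bounded. -/
theorem nonlocal_unstable_wavenumbers_bounded
    (m ε δ : ℝ) (hm : 0 < m) (hε : 0 < ε) (hδ : 0 < δ) :
    ∃ K : ℝ, 0 < K ∧ ∀ k : ℝ, K < |k| →
      ∀ σ : ℂ, IsEigC (Adelta m ε δ k) σ → σ.re < 0 := by
  have h1m : (0:ℝ) < 1 + m := by linarith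
  set b : ℝ := (1 + m) / ε with hbdef
  set d : ℝ := m / (ε * (1 + m)) with hddef
  have hb : 0 < b := by positivity
  have hd : 0 < d := by positivity
  -- α := 1 - 1/(1+m)² > 0
  have hmsq : (1:ℝ) < (1 + m) ^ 2 := by nlinarith
  have hα : (0:ℝ) < 1 - 1 / (1 + m) ^ 2 := by
    have : 1 / (1 + m) ^ 2 < 1 := by
      rw [div_lt_one (by positivity)]; exact hmsq
    linarith
  set α : ℝ := 1 - 1 / (1 + m) ^ 2 with hαdef
  -- coefficient in front of |k| for the nonlocal term
  have h2m : (0:ℝ) < 2 - 1 / (1 + m) := by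
    have : 1 / (1 + m) < 1 := by
      rw [div_lt_one h1m]; linarith
    linarith
  set C : ℝ := 2 * (2 - 1 / (1 + m)) * (1 / δ) * d with hCdef
  have hC : 0 < C := by positivity
  set β : ℝ := α * b with hβdef
  have hβ : 0 < β := mul_pos hα hb
  refine ⟨C / β + 1, by positivity, ?_⟩
  intro k hk σ hσ
  have hkpos : 0 < |k| := lt_trans (by positivity) hk
  set a : ℝ := (1 / (1 + m) ^ 2 - 1) * k ^ 2 with hadef
  set c : ℝ := -2 * (2 - 1 / (1 + m)) * (k / δ) * Real.sin (δ * k) with hcdef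
  -- the eigenvalue equation
  have hmap : (Adelta m ε δ k).map (fun x : ℝ => (x : ℂ)) =
      !![(a : ℂ), 0, 0, (c : ℂ); 0, (a : ℂ), (c : ℂ), 0;
         (d : ℂ), 0, -(b : ℂ), 0; 0, (d : ℂ), 0, -(b : ℂ)] := by
    ext i j
    fin_cases i <;> fin_cases j <;>
      simp [Adelta, Matrix.map_apply, hadef, hcdef, hbdef, hddef] <;> push_cast <;> ring
  rw [IsEigC, hmap, Adelta_det_factor] at hσ
  -- key bound: -a*b dominates |c*d|
  have hab : -(a * b) = β * k ^ 2 := by rw [hβdef, hαdef, hadef]; ring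
  have hcbound : |c| ≤ C / d * |k| := by
    rw [hcdef, hCdef]
    have hs : |Real.sin (δ * k)| ≤ 1 := Real.abs_sin_le_one _
    rw [abs_mul, abs_mul, abs_div]
    have h1 : |(-2 : ℝ) * (2 - 1 / (1 + m))| = 2 * (2 - 1 / (1 + m)) := by
      rw [abs_mul]; rw [abs_of_nonpos (by norm_num), abs_of_pos h2m]; ring
    rw [h1, abs_of_pos hδ]
    have hdd : 2 * (2 - 1 / (1 + m)) * (1 / δ) * d / d = 2 * (2 - 1 / (1 + m)) * (1 / δ) := by
      field_simp
    rw [hdd]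
    calc 2 * (2 - 1 / (1 + m)) * (|k| / δ) * |Real.sin (δ * k)|
        ≤ 2 * (2 - 1 / (1 + m)) * (|k| / δ) * 1 := by
          apply mul_le_mul_of_nonneg_left hs; positivity
      _ = 2 * (2 - 1 / (1 + m)) * (1 / δ) * |k| := by ring
  have hcd : |c * d| ≤ C * |k| := by
    rw [abs_mul, abs_of_pos hd]
    calc |c| * d ≤ (C / d * |k|) * d := by
          apply mul_le_mul_of_nonneg_right hcbound (le_of_lt hd)
      _ = C * |k| := by field_simp
  have hβk : C + β < β * |k| := by
    have h' : C / β < |k| - 1 := by linarith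
    have h'' := (div_lt_iff₀ hβ).mp h'
    nlinarith
  have hdom : C * |k| < β * k ^ 2 := by
    have hCk : C < β * |k| := by linarith
    have h2 := mul_lt_mul_of_pos_right hCk hkpos
    have hk2 : β * |k| * |k| = β * k ^ 2 := by rw [← sq_abs k]; ring
    linarith
  have ha : a ≤ 0 := by
    rw [hadef]
    have hk2 := sq_nonneg k
    nlinarith
  -- p and the two possible q's are positive
  have hp : 0 < b - a := by linarith
  have hq1 : 0 < c * d - a * b := by
    have h1 : -(C * |k|) ≤ c * d := neg_le_of_abs_le hcd
    linarith
  have hq2 : 0 < -(c * d) - a * b := by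
    have h1 : c * d ≤ C * |k| := le_of_abs_le hcd
    linarith
  rcases mul_eq_zero.mp hσ with h' | h'
  · have heq : σ ^ 2 + ((b - a : ℝ) : ℂ) * σ + ((c * d - a * b : ℝ) : ℂ) = 0 := by
      push_cast
      linear_combination -h'
    exact quad_re_neg _ _ hp hq1 σ heq
  · have heq : σ ^ 2 + ((b - a : ℝ) : ℂ) * σ + ((-(c * d) - a * b : ℝ) : ℂ) = 0 := by
      push_cast
      linear_combination -h'
    exact quad_re_neg _ _ hp hq2 σ heq
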